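/- Let $\Phi$ be a continuous flow on a topological space $M$, and let $L \subset M$ be a compact connected invariant set homeomorphic to $S^1$ containing no fixed points of $\Phi$. Then $L$ is a single periodic orbit of $\Phi$. -/

import Mathlib

open Set Complex

noncomputable section

namespace Stmt6Aux

lemma mem_slitPlane_of_ne_neg_one {z : Circle} (hz : (z : ℂ) ≠ -1) :
    (z : ℂ) ∈ Complex.slitPlane := by
  rw [Complex.mem_slitPlane_iff]
  by_contra h
  push_neg at h
  obtain ⟨h1, h2⟩ := h
  have hn : Complex.normSq z = 1 := Circle.normSq_coe z
  rw [Complex.normSq_apply, h2] at hn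
  apply hz
  apply Complex.ext
  · simp only [Complex.neg_re, Complex.one_re]
    nlinarith
  · simp [h2]

lemma continuousAt_arg_circle {z : Circle} (hz : (z : ℂ) ≠ -1) :
    ContinuousAt (fun w : Circle => Complex.arg (w : ℂ)) z :=
  (Complex.continuousAt_arg (mem_slitPlane_of_ne_neg_one hz)).comp
    continuous_subtype_val.continuousAt

/-- Uniqueness of lifts along `Circle.exp` on a preconnected set. -/
lemma exp_lift_eqOn {s : Set ℝ} (hs : IsPreconnected s) {f g : ℝ → ℝ}
    (hf : ContinuousOn f s) (hg : ContinuousOn g s)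
    (h : ∀ t ∈ s, Circle.exp (f t) = Circle.exp (g t))
    {t₀ : ℝ} (ht₀ : t₀ ∈ s) (h0 : f t₀ = g t₀) : Set.EqOn f g s := by
  intro t₁ ht₁
  by_contra hne
  obtain ⟨m, hm⟩ := Circle.exp_eq_exp.1 (h t₁ ht₁)
  have hm0 : m ≠ 0 := by
    rintro rfl; simp at hm; exact hne hm
  have hπ := Real.pi_pos
  rcases lt_or_gt_of_ne hne with hlt | hgt
  · -- f t₁ < g t₁, so f t₁ - g t₁ = m * 2π with m ≤ -1
    have hmneg : (m : ℝ) ≤ -1 := by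
      have : (m : ℝ) * (2 * Real.pi) < 0 := by linarith [hm ▸ hlt]
      have : m < 0 := by
        by_contra hmn; push_neg at hmn
        have : (0:ℝ) ≤ (m:ℝ) * (2*Real.pi) := by positivity
        linarith
      have : m ≤ -1 := by omega
      exact_mod_cast this
    obtain ⟨x, hxs, hx⟩ := hs.intermediate_value₂ ht₁ ht₀
      (hf.sub hg) (continuousOn_const : ContinuousOn (fun _ => (-Real.pi)) s)
      (by rw [Pi.sub_apply, hm]; nlinarith) (by simp only [Pi.sub_apply, h0, sub_self]; linarith)
    obtain ⟨k, hk⟩ := Circle.exp_eq_exp.1 (h x hxs)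
    have : (k : ℝ) * (2 * Real.pi) = -Real.pi := by
      have := hx; rw [Pi.sub_apply, hk] at this; linarith [this]
    have : (2 * (k:ℝ) + 1) * Real.pi = 0 := by ring_nf; ring_nf at this; linarith
    have h2k : (2 * (k:ℝ) + 1) = 0 := by
      rcases mul_eq_zero.1 this with h' | h'
      · exact h'
      · exact absurd h' (ne_of_gt hπ)
    have : (2 * k + 1 : ℤ) = 0 := by exact_mod_cast h2k
    omega
  · -- g t₁ < f t₁
    have hmpos : (1:ℝ) ≤ (m : ℝ) := by
      have : (0:ℝ) < (m : ℝ) * (2 * Real.pi) := by linarith [hm ▸ hgt]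
      have : 0 < m := by
        by_contra hmn; push_neg at hmn
        have : (m:ℝ) * (2*Real.pi) ≤ 0 := by
          apply mul_nonpos_of_nonpos_of_nonneg
          · exact_mod_cast hmn
          · positivity
        linarith
      have : 1 ≤ m := by omega
      exact_mod_cast this
    obtain ⟨x, hxs, hx⟩ := hs.intermediate_value₂ ht₀ ht₁
      (hf.sub hg) (continuousOn_const : ContinuousOn (fun _ => (Real.pi)) s)
      (by simp only [Pi.sub_apply, h0, sub_self]; linarith) (by rw [Pi.sub_apply, hm]; nlinarith)
    obtain ⟨k, hk⟩ := Circle.exp_eq_exp.1 (h x hxs)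
    have : (k : ℝ) * (2 * Real.pi) = Real.pi := by
      have := hx; rw [Pi.sub_apply, hk] at this; linarith [this]
    have : (2 * (k:ℝ) - 1) * Real.pi = 0 := by ring_nf; ring_nf at this; linarith
    have h2k : (2 * (k:ℝ) - 1) = 0 := by
      rcases mul_eq_zero.1 this with h' | h'
      · exact h'
      · exact absurd h' (ne_of_gt hπ)
    have : (2 * k - 1 : ℤ) = 0 := by exact_mod_cast h2k
    omega

/-- Existence of a jointly continuous lift of a circle flow along `Circle.exp`. -/
lemma exists_lift (ψ : ℝ → Circle → Circle)
    (hc : Continuous fun p : ℝ × Circle => ψ p.1 p.2)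
    (h0 : ∀ z, ψ 0 z = z)
    (hadd : ∀ s t z, ψ (s + t) z = ψ s (ψ t z)) :
    ∃ G : ℝ → ℝ → ℝ, Continuous (fun p : ℝ × ℝ => G p.1 p.2) ∧
      (∀ t x, Circle.exp (G t x) = ψ t (Circle.exp x)) ∧ (∀ x, G 0 x = x) := by
  classical
  -- find η > 0 such that ψ s z is never antipodal to z for |s| < 2η
  obtain ⟨u, v, hu, -, h0u, hvu, huv⟩ :=
    generalized_tube_lemma isCompact_singleton (isCompact_univ (X := Circle))
      (n := {p : ℝ × Circle | ((ψ p.1 p.2 / p.2 : Circle) : ℂ) ≠ -1})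
      (by
        have hcont : Continuous fun p : ℝ × Circle => ((ψ p.1 p.2 / p.2 : Circle) : ℂ) :=
          continuous_subtype_val.comp (hc.div' continuous_snd)
        exact (isClosed_singleton (x := (-1 : ℂ))).isOpen_compl.preimage hcont)
      (by
        rintro ⟨s, z⟩ hp
        rw [Set.mem_prod] at hp
        have hs : s = 0 := hp.1
        subst hs
        simp only [mem_setOf_eq]
        intro h
        rw [h0, div_self', Circle.coe_one] at h
        norm_num at h)
  obtain ⟨ε, hε, hball⟩ := Metric.isOpen_iff.1 hu 0 (Set.singleton_subset_iff.mp h0u)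
  set η : ℝ := ε / 2 with hη
  have hηpos : 0 < η := by positivity
  have hkey : ∀ s : ℝ, |s| < 2 * η → ∀ z : Circle, ((ψ s z / z : Circle) : ℂ) ≠ -1 := by
    intro s hs z
    have hsu : s ∈ u := hball (by simpa [Real.dist_eq, hη] using (by linarith [hs] : |s| < ε))
    exact huv (Set.mk_mem_prod hsu (hvu (mem_univ z)))
  -- local lift
  set ℓ : ℝ → ℝ → ℝ :=
    fun s x => x + Complex.arg ((ψ s (Circle.exp x) / Circle.exp x : Circle) : ℂ) with hℓ
  have hℓexp : ∀ s x, Circle.exp (ℓ s x) = ψ s (Circle.exp x) := by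
    intro s x
    rw [hℓ]
    simp only [Circle.exp_add]
    rw [Circle.exp_arg]
    exact mul_div_cancel _ _
  have hℓ0 : ∀ x, ℓ 0 x = x := by
    intro x
    simp [hℓ, h0, Complex.arg_one]
  have hℓcont : ∀ s x : ℝ, |s| < 2 * η →
      ContinuousAt (fun p : ℝ × ℝ => ℓ p.1 p.2) (s, x) := by
    intro s x hs
    apply ContinuousAt.add continuousAt_snd
    have hF : Continuous fun p : ℝ × ℝ => (ψ p.1 (Circle.exp p.2) / Circle.exp p.2 : Circle) := by
      have hpair : Continuous fun p : ℝ × ℝ => ((p.1, Circle.exp p.2) : ℝ × Circle) :=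
        continuous_fst.prodMk (Circle.exp.continuous.comp continuous_snd)
      exact (hc.comp hpair).div' (Circle.exp.continuous.comp continuous_snd)
    show ContinuousAt ((fun w : Circle => Complex.arg (w : ℂ)) ∘
      (fun p : ℝ × ℝ => (ψ p.1 (Circle.exp p.2) / Circle.exp p.2 : Circle))) (s, x)
    exact ContinuousAt.comp (continuousAt_arg_circle (hkey s hs _)) hF.continuousAt
  -- iterated lift
  set H : ℕ → ℝ → ℝ → ℝ := fun n s x => (ℓ s)^[n] x with hH
  have hHsucc : ∀ n s x, H (n + 1) s x = ℓ s (H n s x) := by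
    intro n s x
    simp only [hH, Function.iterate_succ_apply']
  have hHexp : ∀ (n : ℕ) (s x : ℝ), Circle.exp (H n s x) = ψ (n * s) (Circle.exp x) := by
    intro n
    induction n with
    | zero => intro s x; simp only [hH, Function.iterate_zero, id_eq, Nat.cast_zero, zero_mul, h0]
    | succ n ih =>
      intro s x
      rw [hHsucc, hℓexp, ih, ← hadd]
      norm_num
      ring_nf
  have hH0 : ∀ n x, H n 0 x = x := by
    intro n
    induction n with
    | zero => intro x; simp [hH]
    | succ n ih => intro x; rw [hHsucc, ih, hℓ0]
  have hHcont : ∀ (n : ℕ) (s x : ℝ), |s| < 2 * η →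
      ContinuousAt (fun p : ℝ × ℝ => H n p.1 p.2) (s, x) := by
    intro n
    induction n with
    | zero => intro s x _; simpa [hH] using (continuousAt_snd : ContinuousAt Prod.snd ((s : ℝ), (x : ℝ)))
    | succ n ih =>
      intro s x hs
      have : (fun p : ℝ × ℝ => H (n+1) p.1 p.2)
          = (fun p : ℝ × ℝ => ℓ p.1 p.2) ∘ (fun p : ℝ × ℝ => (p.1, H n p.1 p.2)) := by
        funext p; simp [hHsucc]
      rw [this]
      exact ContinuousAt.comp (f := fun p : ℝ × ℝ => (p.1, H n p.1 p.2))
        (hℓcont s (H n s x) hs) (continuousAt_fst.prodMk (ih s x hs))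
  -- global lift
  set N : ℝ → ℕ := fun t => ⌊|t| / η⌋₊ + 1 with hN
  have hNpos : ∀ t, 0 < N t := fun t => Nat.succ_pos _
  have hNbig : ∀ t, |t| < N t * η := by
    intro t
    have h1 : |t| / η < (⌊|t| / η⌋₊ : ℝ) + 1 := Nat.lt_floor_add_one _
    have h2 : ((N t : ℕ) : ℝ) = (⌊|t| / η⌋₊ : ℝ) + 1 := by simp [hN]
    calc |t| = |t| / η * η := by field_simp
    _ < ((N t : ℕ) : ℝ) * η := by rw [h2]; exact mul_lt_mul_of_pos_right h1 hηpos
  set G : ℝ → ℝ → ℝ := fun t x => H (N t) (t / N t) x with hG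
  -- a single lemma: for any positive n with |t| ≤ n * η, G t x = H n (t/n) x
  have hcast : ∀ n : ℕ, 0 < n → ((n : ℝ) ≠ 0) := by
    intro n hn
    exact_mod_cast Nat.pos_iff_ne_zero.mp hn
  have hHcontOn : ∀ (n : ℕ), 0 < n → ∀ x : ℝ, ∀ u : ℝ, |u| ≤ n * η →
      ContinuousAt (fun w : ℝ => H n (w / n) x) u := by
    intro n hn x u hu
    have hn' : (0:ℝ) < (n:ℝ) := by exact_mod_cast hn
    have habs : |u / (n:ℝ)| < 2 * η := by
      rw [abs_div, abs_of_pos hn']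
      calc |u| / (n:ℝ) ≤ (n:ℝ) * η / n := by gcongr
      _ = η := by field_simp
      _ < 2 * η := by linarith
    exact ContinuousAt.comp (f := fun w : ℝ => ((w / (n:ℝ), x) : ℝ × ℝ))
      (hHcont n (u / n) x habs)
      ((continuousAt_id.div_const _).prodMk continuousAt_const)
  have hconsist : ∀ (n : ℕ), 0 < n → ∀ (t x : ℝ), |t| ≤ n * η →
      G t x = H n (t / n) x := by
    intro n hn t x ht
    have hn' : (0:ℝ) < (n:ℝ) := by exact_mod_cast hn
    have hm := hNpos t
    have hm' : (0:ℝ) < ((N t : ℕ):ℝ) := by exact_mod_cast hm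
    set c : ℝ := min ((n:ℝ) * η) ((N t : ℕ) * η) with hc'
    have hcpos : 0 < c := lt_min (by positivity) (by positivity)
    have htc : t ∈ Icc (-c) c := by
      have : |t| ≤ c := le_min ht (le_of_lt (hNbig t))
      exact abs_le.1 this
    have h0c : (0:ℝ) ∈ Icc (-c) c := ⟨by linarith, by linarith⟩
    have heq : Set.EqOn (fun u => H n (u / n) x) (fun u => H (N t) (u / N t) x)
        (Icc (-c) c) := by
      apply exp_lift_eqOn isPreconnected_Icc
      · intro u hu
        apply (hHcontOn n hn x u ?_).continuousWithinAt
        exact (abs_le.2 ⟨by simpa using hu.1, hu.2⟩).trans (min_le_left _ _)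
      · intro u hu
        apply (hHcontOn (N t) hm x u ?_).continuousWithinAt
        exact (abs_le.2 ⟨by simpa using hu.1, hu.2⟩).trans (min_le_right _ _)
      · intro u _
        rw [hHexp, hHexp, mul_div_cancel₀ u (hcast n hn), mul_div_cancel₀ u (hcast _ hm)]
      · exact h0c
      · simp only [zero_div, hH0]
    exact (heq htc).symm
  refine ⟨G, ?_, ?_, ?_⟩
  · -- continuity
    rw [continuous_iff_continuousAt]
    rintro ⟨t₀, x₀⟩
    set n : ℕ := N t₀ with hn
    have hnpos := hNpos t₀
    have hU : IsOpen {p : ℝ × ℝ | |p.1| < (n:ℝ) * η} :=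
      isOpen_lt (continuous_abs.comp continuous_fst) continuous_const
    have hmem : (t₀, x₀) ∈ {p : ℝ × ℝ | |p.1| < (n:ℝ) * η} := hNbig t₀
    have hca : ContinuousAt (fun p : ℝ × ℝ => H n (p.1 / n) p.2) (t₀, x₀) := by
      have hn' : (0:ℝ) < (n:ℝ) := by exact_mod_cast hnpos
      have habs : |t₀ / (n:ℝ)| < 2 * η := by
        rw [abs_div, abs_of_pos hn']
        have hb := hNbig t₀
        calc |t₀| / (n:ℝ) < (n:ℝ) * η / n := by gcongr
        _ = η := by field_simp
        _ < 2 * η := by linarith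
      exact ContinuousAt.comp (x := (t₀, x₀)) (f := fun p : ℝ × ℝ => ((p.1 / (n:ℝ), p.2) : ℝ × ℝ))
        (hHcont n (t₀ / n) x₀ habs)
        ((continuousAt_fst.div_const _).prodMk continuousAt_snd)
    apply hca.congr
    apply Filter.eventuallyEq_of_mem (hU.mem_nhds hmem)
    intro p hp
    exact (hconsist n hnpos p.1 p.2 (le_of_lt hp)).symm
  · -- exp property
    intro t x
    show Circle.exp (H (N t) (t / N t) x) = _
    rw [hHexp, mul_div_cancel₀ t (hcast _ (hNpos t))]
  · -- zero
    intro x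
    show H (N 0) (0 / N 0) x = x
    rw [zero_div, hH0]

/-- A fixed-point-free continuous flow on the circle is periodic with dense (= full) orbit. -/
lemma circle_key (ψ : ℝ → Circle → Circle)
    (hc : Continuous fun p : ℝ × Circle => ψ p.1 p.2)
    (h0 : ∀ z, ψ 0 z = z)
    (hadd : ∀ s t z, ψ (s + t) z = ψ s (ψ t z))
    (hnofix : ∀ z : Circle, ∃ t : ℝ, ψ t z ≠ z) :
    (∃ T : ℝ, T ≠ 0 ∧ ψ T 1 = 1) ∧ ∀ z : Circle, ∃ t : ℝ, ψ t 1 = z := by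
  classical
  obtain ⟨G, hGc, hGexp, hG0⟩ := exists_lift ψ hc h0 hadd
  have hGc1 : ∀ x, Continuous fun t => G t x := by
    intro x
    exact hGc.comp (continuous_id.prodMk continuous_const)
  have hGc2 : ∀ t, Continuous fun x => G t x := by
    intro t
    exact hGc.comp (continuous_const.prodMk continuous_id)
  have flowG : ∀ (t x s : ℝ), G (s + t) x = G s (G t x) := by
    intro t x
    have heq : Set.EqOn (fun s => G (s + t) x) (fun s => G s (G t x)) Set.univ := by
      apply exp_lift_eqOn isPreconnected_univ
      · exact ((hGc1 x).comp (continuous_id.add continuous_const)).continuousOn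
      · exact (hGc1 (G t x)).continuousOn
      · intro s _
        show Circle.exp (G (s + t) x) = Circle.exp (G s (G t x))
        rw [hGexp, hGexp, hadd, hGexp]
      · exact Set.mem_univ 0
      · simp only [zero_add, hG0]
    exact fun s => heq (Set.mem_univ s)
  have injG : ∀ t : ℝ, Function.Injective (G t) := by
    intro t a b hab
    have ha : G (-t) (G t a) = a := by rw [← flowG, neg_add_cancel, hG0]
    have hb : G (-t) (G t b) = b := by rw [← flowG, neg_add_cancel, hG0]
    rw [← ha, ← hb, hab]
  have monoG : ∀ (t a b : ℝ), a < b → G t a < G t b := by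
    intro t a b hab
    by_contra hle
    push_neg at hle
    have hne : G t b ≠ G t a := fun e => (ne_of_lt hab) (injG t e.symm)
    have hlt : G t b < G t a := lt_of_le_of_ne hle hne
    set φ : ℝ → ℝ := fun u => G u b - G u a with hφ
    have hφc : ContinuousOn φ (Set.uIcc t 0) := ((hGc1 b).sub (hGc1 a)).continuousOn
    have h0' : (0:ℝ) ∈ Set.Icc (φ t) (φ 0) := by
      constructor
      · simp only [hφ]; linarith
      · simp only [hφ, hG0]; linarith
    obtain ⟨u, -, hu⟩ := intermediate_value_uIcc hφc (Set.Icc_subset_uIcc h0')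
    have : G u b = G u a := by
      have := hu
      simp only [hφ] at this
      linarith
    exact (ne_of_lt hab) (injG u this.symm)
  have monoG' : ∀ (t a b : ℝ), a ≤ b → G t a ≤ G t b := by
    intro t a b hab
    rcases eq_or_lt_of_le hab with h | h
    · rw [h]
    · exact le_of_lt (monoG t a b h)
  have noTrapAbove : ∀ b : ℝ, ¬ (∀ s : ℝ, G s b ≤ b) := by
    intro b hyp
    have fix : ∀ s, G s b = b := by
      intro s
      have h1 : G s (G (-s) b) ≤ G s b := monoG' s _ _ (hyp (-s))
      have h2 : G (s + -s) b = G s (G (-s) b) := flowG (-s) b s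
      rw [add_neg_cancel, hG0] at h2
      have h3 : b ≤ G s b := by
        calc b = G s (G (-s) b) := h2
        _ ≤ G s b := h1
      exact le_antisymm (hyp s) h3
    obtain ⟨t, hne⟩ := hnofix (Circle.exp b)
    apply hne
    rw [← hGexp, fix]
  have noTrapBelow : ∀ b : ℝ, ¬ (∀ s : ℝ, b ≤ G s b) := by
    intro b hyp
    have fix : ∀ s, G s b = b := by
      intro s
      have h1 : G s b ≤ G s (G (-s) b) := monoG' s _ _ (hyp (-s))
      have h2 : G (s + -s) b = G s (G (-s) b) := flowG (-s) b s
      rw [add_neg_cancel, hG0] at h2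
      have h3 : G s b ≤ b := by
        calc G s b ≤ G s (G (-s) b) := h1
        _ = b := h2.symm
      exact le_antisymm h3 (hyp s)
    obtain ⟨t, hne⟩ := hnofix (Circle.exp b)
    apply hne
    rw [← hGexp, fix]
  set c : ℝ → ℝ := fun t => G t 0 with hcdef
  have hcc : Continuous c := hGc1 0
  have hrange : ∀ s : ℝ, ∀ y ∈ Set.range c, G s y ∈ Set.range c := by
    rintro s y ⟨t, rfl⟩
    exact ⟨s + t, flowG t 0 s⟩
  have hclosure : ∀ (s b : ℝ), b ∈ closure (Set.range c) → G s b ∈ closure (Set.range c) := by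
    intro s b hb
    have h1 : G s b ∈ G s '' closure (Set.range c) := Set.mem_image_of_mem _ hb
    have h2 : G s '' closure (Set.range c) ⊆ closure (G s '' Set.range c) :=
      image_closure_subset_closure_image (hGc2 s)
    have h3 : closure (G s '' Set.range c) ⊆ closure (Set.range c) := by
      apply closure_mono
      rintro w ⟨y, hy, rfl⟩
      exact hrange s y hy
    exact h3 (h2 h1)
  have hnba : ¬ BddAbove (Set.range c) := by
    intro hbdd
    set b : ℝ := sSup (Set.range c) with hb
    have hbc : b ∈ closure (Set.range c) := csSup_mem_closure (Set.range_nonempty c) hbdd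
    apply noTrapAbove b
    intro s
    have h1 : G s b ∈ closure (Set.range c) := hclosure s b hbc
    have h2 : closure (Set.range c) ⊆ Set.Iic b := by
      apply closure_minimal ?_ isClosed_Iic
      intro y hy
      exact le_csSup hbdd hy
    exact h2 h1
  have hnbb : ¬ BddBelow (Set.range c) := by
    intro hbdd
    set b : ℝ := sInf (Set.range c) with hb
    have hbc : b ∈ closure (Set.range c) := csInf_mem_closure (Set.range_nonempty c) hbdd
    apply noTrapBelow b
    intro s
    have h1 : G s b ∈ closure (Set.range c) := hclosure s b hbc
    have h2 : closure (Set.range c) ⊆ Set.Ici b := by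
      apply closure_minimal ?_ isClosed_Ici
      intro y hy
      exact csInf_le hbdd hy
    exact h2 h1
  have hsurj : ∀ w : ℝ, ∃ t : ℝ, c t = w := by
    intro w
    rw [not_bddAbove_iff] at hnba
    rw [not_bddBelow_iff] at hnbb
    obtain ⟨y1, ⟨t1, rfl⟩, hy1⟩ := hnba w
    obtain ⟨y2, ⟨t2, rfl⟩, hy2⟩ := hnbb w
    have : w ∈ Set.Icc (c t2) (c t1) := ⟨le_of_lt hy2, le_of_lt hy1⟩
    obtain ⟨t, -, ht⟩ := intermediate_value_uIcc hcc.continuousOn (Set.Icc_subset_uIcc this)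
    exact ⟨t, ht⟩
  have injC : Function.Injective c := by
    have absurdity : ∀ t1 t2 : ℝ, t1 < t2 → c t1 = c t2 → False := by
      intro t1 t2 h12 hceq
      set τ : ℝ := t2 - t1 with hτdef
      have hτpos : 0 < τ := by simp [hτdef]; linarith
      set y : ℝ := c t1 with hydef
      have hτy : G τ y = y := by
        have h1 : G (τ + t1) 0 = G τ (G t1 0) := flowG t1 0 τ
        have h2 : τ + t1 = t2 := by ring
        rw [h2] at h1
        show G τ (G t1 0) = c t1
        rw [← h1]
        exact hceq.symm
      set o : ℝ → ℝ := fun u => G u y with hodef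
      have hoper : Function.Periodic o τ := by
        intro u
        show G (u + τ) y = G u y
        rw [flowG τ y u, hτy]
      have hoc : Continuous o := hGc1 y
      obtain ⟨t₀, ht₀, hmax⟩ := isCompact_Icc.exists_isMaxOn
        (Set.nonempty_Icc.2 (le_of_lt hτpos)) hoc.continuousOn
      have hall : ∀ u : ℝ, o u ≤ o t₀ := by
        intro u
        have h1 : 0 ≤ u - ⌊u / τ⌋ * τ := Int.sub_floor_div_mul_nonneg u hτpos
        have h2 : u - ⌊u / τ⌋ * τ < τ := Int.sub_floor_div_mul_lt u hτpos
        have h3 : o (u - ⌊u / τ⌋ * τ) = o u := hoper.sub_int_mul_eq _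
        rw [← h3]
        exact hmax ⟨h1, le_of_lt h2⟩
      apply noTrapAbove (o t₀)
      intro s
      have : G s (o t₀) = o (s + t₀) := by
        show G s (G t₀ y) = G (s + t₀) y
        rw [flowG t₀ y s]
      rw [this]
      exact hall _
    intro t1 t2 he
    rcases lt_trichotomy t1 t2 with h | h | h
    · exact absurd he (fun e => absurdity t1 t2 h e)
    · exact h
    · exact absurd he.symm (fun e => absurdity t2 t1 h e)
  constructor
  · obtain ⟨T, hT⟩ := hsurj (2 * Real.pi)
    refine ⟨T, ?_, ?_⟩
    · intro hT0
      rw [hT0] at hT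
      have : c 0 = 0 := hG0 0
      rw [this] at hT
      have := Real.two_pi_pos
      linarith
    · have h1 : Circle.exp (c T) = ψ T (Circle.exp 0) := hGexp T 0
      rw [hT, Circle.exp_two_pi, Circle.exp_zero] at h1
      exact h1.symm
  · intro z
    obtain ⟨t, ht⟩ := hsurj (Complex.arg (z : ℂ))
    refine ⟨t, ?_⟩
    have h1 : Circle.exp (c t) = ψ t (Circle.exp 0) := hGexp t 0
    rw [ht, Circle.exp_arg, Circle.exp_zero] at h1
    exact h1.symm

/-- The unit sphere in `EuclideanSpace ℝ (Fin 2)` is homeomorphic to the unit circle. -/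
def sphereHomeoCircle : (Metric.sphere (0 : EuclideanSpace ℝ (Fin 2)) 1) ≃ₜ Circle where
  toFun x := ⟨Complex.orthonormalBasisOneI.repr.symm (x : EuclideanSpace ℝ (Fin 2)), by
    show _ ∈ Metric.sphere (0 : ℂ) 1
    rw [mem_sphere_zero_iff_norm, LinearIsometryEquiv.norm_map]
    exact mem_sphere_zero_iff_norm.1 x.2⟩
  invFun z := ⟨Complex.orthonormalBasisOneI.repr (z : ℂ), by
    rw [mem_sphere_zero_iff_norm, LinearIsometryEquiv.norm_map]
    exact mem_sphere_zero_iff_norm.1 z.2⟩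
  left_inv x := Subtype.ext (by
    simp only [Complex.orthonormalBasisOneI_repr_apply,
      Complex.orthonormalBasisOneI_repr_symm_apply]
    ext i
    fin_cases i <;> simp)
  right_inv z := Subtype.ext (by simp)
  continuous_toFun := Continuous.subtype_mk
    ((Complex.orthonormalBasisOneI.repr.symm.continuous).comp continuous_subtype_val)
    (fun x => by
      show _ ∈ Metric.sphere (0 : ℂ) 1
      rw [mem_sphere_zero_iff_norm, Function.comp_apply, LinearIsometryEquiv.norm_map]
      exact mem_sphere_zero_iff_norm.1 x.2)
  continuous_invFun := Continuous.subtype_mk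
    ((Complex.orthonormalBasisOneI.repr.continuous).comp continuous_subtype_val)
    (fun z => by
      rw [mem_sphere_zero_iff_norm, Function.comp_apply, LinearIsometryEquiv.norm_map]
      exact mem_sphere_zero_iff_norm.1 z.2)

end Stmt6Aux

/-- A compact connected invariant set of a continuous flow, homeomorphic to the
circle and containing no fixed points, is a single periodic orbit. -/
theorem stmt6 {M : Type*} [TopologicalSpace M] (Φ : Flow ℝ M) {L : Set M}
    (hcomp : IsCompact L) (hconn : IsConnected L)
    (hinv : ∀ t : ℝ, Φ t '' L = L)
    (hcirc : Nonempty (L ≃ₜ (Metric.sphere (0 : EuclideanSpace ℝ (Fin 2)) 1)))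
    (hnofix : ∀ p ∈ L, ∃ t : ℝ, Φ t p ≠ p) :
    ∃ p ∈ L, ∃ T : ℝ, 0 < T ∧ Φ T p = p ∧ (∀ t : ℝ, 0 < t → t < T → Φ t p ≠ p) ∧
      L = Set.range fun t : ℝ => Φ t p := by
  classical
  obtain ⟨e0⟩ := hcirc
  set e : L ≃ₜ Circle := e0.trans Stmt6Aux.sphereHomeoCircle with he
  have hL : ∀ (t : ℝ) (x : M), x ∈ L → Φ t x ∈ L := by
    intro t x hx
    rw [← hinv t]
    exact Set.mem_image_of_mem _ hx
  set ψ : ℝ → Circle → Circle :=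
    fun t z => e ⟨Φ t ((e.symm z : L) : M), hL t _ (e.symm z).2⟩ with hψ
  have hc : Continuous fun p : ℝ × Circle => ψ p.1 p.2 := by
    apply e.continuous.comp
    apply Continuous.subtype_mk
    exact Φ.continuous continuous_fst
      ((continuous_subtype_val.comp e.symm.continuous).comp continuous_snd)
  have h0 : ∀ z, ψ 0 z = z := by
    intro z
    show e ⟨Φ 0 _, _⟩ = z
    have h1 : (⟨Φ 0 ((e.symm z : L) : M), hL 0 _ (e.symm z).2⟩ : L) = e.symm z :=
      Subtype.ext (Φ.map_zero_apply _)
    rw [h1, e.apply_symm_apply]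
  have hadd : ∀ s t z, ψ (s + t) z = ψ s (ψ t z) := by
    intro s t z
    show e ⟨Φ (s + t) _, _⟩ = e ⟨Φ s _, _⟩
    congr 1
    apply Subtype.ext
    show Φ (s + t) ((e.symm z : L) : M) = Φ s _
    rw [e.symm_apply_apply]
    exact Φ.map_add s t _
  have hnofix' : ∀ z : Circle, ∃ t, ψ t z ≠ z := by
    intro z
    obtain ⟨t, ht⟩ := hnofix ((e.symm z : L) : M) (e.symm z).2
    refine ⟨t, fun hcon => ht ?_⟩
    have h1 : (⟨Φ t ((e.symm z : L) : M), hL t _ (e.symm z).2⟩ : L) = e.symm z := by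
      apply e.injective
      rw [e.apply_symm_apply]
      exact hcon
    exact congrArg Subtype.val h1
  obtain ⟨⟨T1, hT1ne, hT1⟩, hsur⟩ := Stmt6Aux.circle_key ψ hc h0 hadd hnofix'
  set p : M := ((e.symm 1 : L) : M) with hpdef
  have hpL : p ∈ L := (e.symm 1).2
  have hTp : Φ T1 p = p := by
    have h1 : (⟨Φ T1 ((e.symm 1 : L) : M), hL T1 _ (e.symm 1).2⟩ : L) = e.symm 1 := by
      apply e.injective
      rw [e.apply_symm_apply]
      exact hT1
    exact congrArg Subtype.val h1
  -- basic algebra of the period set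
  have hPneg : ∀ t : ℝ, Φ t p = p → Φ (-t) p = p := by
    intro t ht
    have h1 : Φ (-t + t) p = Φ (-t) (Φ t p) := Φ.map_add _ _ _
    rw [neg_add_cancel, Φ.map_zero_apply, ht] at h1
    exact h1.symm
  have hPadd : ∀ s t : ℝ, Φ s p = p → Φ t p = p → Φ (s + t) p = p := by
    intro s t hs ht
    rw [Φ.map_add, ht, hs]
  -- a positive period exists
  have hT2 : ∃ T : ℝ, 0 < T ∧ Φ T p = p := by
    rcases lt_trichotomy T1 0 with h | h | h
    · exact ⟨-T1, by linarith, hPneg T1 hTp⟩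
    · exact absurd h hT1ne
    · exact ⟨T1, h, hTp⟩
  obtain ⟨T2, hT2pos, hT2p⟩ := hT2
  haveI : T2Space L := e.isEmbedding.t2Space
  set σ : ℝ → L := fun t => ⟨Φ t p, hL t p hpL⟩ with hσ
  have hσc : Continuous σ :=
    Continuous.subtype_mk (Φ.continuous continuous_id continuous_const) _
  set P : Set ℝ := σ ⁻¹' {(⟨p, hpL⟩ : L)} with hP
  have hPiff : ∀ t : ℝ, t ∈ P ↔ Φ t p = p := by
    intro t
    constructor
    · intro h
      exact congrArg Subtype.val (Set.mem_singleton_iff.1 h)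
    · intro h
      exact Set.mem_singleton_iff.2 (Subtype.ext h)
  have hPclosed : IsClosed P := IsClosed.preimage hσc isClosed_singleton
  have hPmul : ∀ t : ℝ, t ∈ P → ∀ n : ℤ, ((n : ℝ) * t) ∈ P := by
    intro t ht n
    rw [hPiff] at ht
    induction n using Int.induction_on with
    | zero =>
      rw [hPiff]
      simpa using Φ.map_zero_apply p
    | succ k ih =>
      have hcast : ((k + 1 : ℤ) : ℝ) * t = t + ((k : ℤ) : ℝ) * t := by push_cast; ring
      rw [hPiff] at ih ⊢
      rw [hcast]
      exact hPadd t _ ht ih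
    | pred k ih =>
      have hcast : ((-k - 1 : ℤ) : ℝ) * t = -t + ((-k : ℤ) : ℝ) * t := by push_cast; ring
      rw [hPiff] at ih ⊢
      rw [hcast]
      exact hPadd (-t) _ (hPneg t ht) ih
  set A : Set ℝ := P ∩ Set.Ioi 0 with hA
  have hAne : A.Nonempty := ⟨T2, (hPiff T2).2 hT2p, hT2pos⟩
  have hAbdd : BddBelow A := ⟨0, fun a ha => le_of_lt ha.2⟩
  set T0 : ℝ := sInf A with hT0
  have hT0P : T0 ∈ P := by
    have h1 : T0 ∈ closure A := csInf_mem_closure hAne hAbdd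
    have h2 : closure A ⊆ closure P := closure_mono Set.inter_subset_left
    rw [hPclosed.closure_eq] at h2
    exact h2 h1
  have hT0nonneg : 0 ≤ T0 := le_csInf hAne fun a ha => le_of_lt ha.2
  have hT0pos : 0 < T0 := by
    rcases lt_or_eq_of_le hT0nonneg with h | h
    · exact h
    · exfalso
      have hPall : ∀ r : ℝ, r ∈ P := by
        intro r
        have hrc : r ∈ closure P := by
          rw [Metric.mem_closure_iff]
          intro ε hε
          have hlt : sInf A < ε := by rw [← hT0, ← h]; exact hε
          obtain ⟨t0, ht0A, ht0lt⟩ := (csInf_lt_iff hAbdd hAne).1 hlt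
          have ht0pos : 0 < t0 := ht0A.2
          refine ⟨((⌊r / t0⌋ : ℤ) : ℝ) * t0, hPmul t0 ht0A.1 _, ?_⟩
          have h1 : 0 ≤ r - ⌊r / t0⌋ * t0 := Int.sub_floor_div_mul_nonneg r ht0pos
          have h2 : r - ⌊r / t0⌋ * t0 < t0 := Int.sub_floor_div_mul_lt r ht0pos
          rw [Real.dist_eq, _root_.abs_of_nonneg h1]
          linarith
        rwa [hPclosed.closure_eq] at hrc
      obtain ⟨t, ht⟩ := hnofix p hpL
      exact ht ((hPiff t).1 (hPall t))
  have hmin : ∀ t : ℝ, 0 < t → t < T0 → Φ t p ≠ p := by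
    intro t h1 h2 hcon
    have : T0 ≤ t := csInf_le hAbdd ⟨(hPiff t).2 hcon, h1⟩
    linarith
  have hrange : L = Set.range fun t : ℝ => Φ t p := by
    apply Set.Subset.antisymm
    · intro q hq
      obtain ⟨t, ht⟩ := hsur (e ⟨q, hq⟩)
      exact ⟨t, congrArg Subtype.val (e.injective ht)⟩
    · rintro x ⟨t, rfl⟩
      exact hL t p hpL
  exact ⟨p, hpL, T0, hT0pos, (hPiff T0).1 hT0P, hmin, hrange⟩
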